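/- In type A_ℓ, for every element γ of the positive root lattice, the length |γ| (minimum number of roots, positive or negative, summing to γ) equals the positive length |γ|₊ (minimum number of positive roots summing to γ). -/

import Mathlib

open Finset

/-- The length of `γ` with respect to a set `S`: the minimal number of elements
of `S` (with repetition) summing to `γ`. -/
noncomputable def minLen {V : Type*} [AddCommMonoid V] (S : Set V) (γ : V) : ℕ :=
  sInf {r : ℕ | ∃ m : Multiset V, (∀ x ∈ m, x ∈ S) ∧ m.sum = γ ∧ Multiset.card m = r}

/-- The roots of type `A_ℓ`, realized as `eᵢ - eⱼ` (`i ≠ j`) in `ℤ^{ℓ+1}`. -/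
def rootsA (ℓ : ℕ) : Set (Fin (ℓ + 1) → ℤ) :=
  {v | ∃ i j : Fin (ℓ + 1), i ≠ j ∧ v = Pi.single i 1 - Pi.single j 1}

/-- The positive roots of type `A_ℓ`: `eᵢ - eⱼ` for `i < j`. -/
def posRootsA (ℓ : ℕ) : Set (Fin (ℓ + 1) → ℤ) :=
  {v | ∃ i j : Fin (ℓ + 1), i < j ∧ v = Pi.single i 1 - Pi.single j 1}

namespace AproofAux

variable {ℓ : ℕ}

/-- The sum of the positive parts of the coordinates. -/
def Npos (γ : Fin (ℓ + 1) → ℤ) : ℕ := ∑ i, (γ i).toNat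

lemma npos_step (s : Fin (ℓ + 1) → ℤ) (i j : Fin (ℓ + 1)) :
    Npos ((Pi.single i 1 - Pi.single j 1 : Fin (ℓ + 1) → ℤ) + s) ≤ Npos s + 1 := by
  have key : ∀ k, (((Pi.single i 1 - Pi.single j 1 : Fin (ℓ + 1) → ℤ) + s) k).toNat
      ≤ (s k).toNat + (if k = i then 1 else 0) := by
    intro k
    simp only [Pi.add_apply, Pi.sub_apply, Pi.single_apply]
    split_ifs <;> omega
  calc Npos ((Pi.single i 1 - Pi.single j 1 : Fin (ℓ + 1) → ℤ) + s)
      ≤ ∑ k, ((s k).toNat + if k = i then 1 else 0) :=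
        Finset.sum_le_sum fun k _ => key k
    _ = Npos s + 1 := by
        rw [Finset.sum_add_distrib]
        simp [Npos]

lemma lower (m : Multiset (Fin (ℓ + 1) → ℤ)) (hm : ∀ x ∈ m, x ∈ rootsA ℓ) :
    Npos m.sum ≤ Multiset.card m := by
  induction m using Multiset.induction with
  | empty => simp [Npos]
  | cons a s ih =>
    obtain ⟨i, j, hij, rfl⟩ := hm a (Multiset.mem_cons_self a s)
    have h1 := npos_step s.sum i j
    have h2 := ih (fun x hx => hm x (Multiset.mem_cons_of_mem hx))
    simp only [Multiset.sum_cons, Multiset.card_cons]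
    omega

lemma root_total_sum (i j : Fin (ℓ + 1)) :
    ∑ m, (Pi.single i 1 - Pi.single j 1 : Fin (ℓ + 1) → ℤ) m = 0 := by
  simp [Finset.sum_sub_distrib, Pi.single_apply, Finset.sum_ite_eq']

lemma root_Iic_sum (i j k : Fin (ℓ + 1)) :
    ∑ m ∈ Finset.Iic k, (Pi.single i 1 - Pi.single j 1 : Fin (ℓ + 1) → ℤ) m
      = (if i ≤ k then 1 else 0) - (if j ≤ k then 1 else 0) := by
  simp only [Pi.sub_apply]
  rw [Finset.sum_sub_distrib]
  congr 1 <;> simp [Pi.single_apply, Finset.sum_ite_eq', Finset.mem_Iic]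

lemma construct : ∀ n : ℕ, ∀ γ : Fin (ℓ + 1) → ℤ, Npos γ = n →
    (∑ i, γ i = 0) → (∀ k, 0 ≤ ∑ i ∈ Finset.Iic k, γ i) →
    ∃ m : Multiset (Fin (ℓ + 1) → ℤ),
      (∀ x ∈ m, x ∈ posRootsA ℓ) ∧ m.sum = γ ∧ Multiset.card m = n := by
  intro n
  induction n with
  | zero =>
    intro γ hN hsum _
    have h1 : ∀ i ∈ (univ : Finset (Fin (ℓ + 1))), γ i ≤ 0 := by
      intro i _
      have : (γ i).toNat = 0 := by
        have := (Finset.sum_eq_zero_iff (s := (univ : Finset (Fin (ℓ + 1))))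
          (f := fun i => (γ i).toNat)).mp hN
        exact this i (mem_univ i)
      omega
    have h2 : ∑ i, (-γ i) = 0 := by
      rw [Finset.sum_neg_distrib, hsum, neg_zero]
    have h3 := (Finset.sum_eq_zero_iff_of_nonneg
      (fun i hi => neg_nonneg.mpr (h1 i hi))).mp h2
    have hγ0 : γ = 0 := by
      funext k
      have := h3 k (mem_univ k)
      simpa using neg_eq_zero.mp this
    exact ⟨0, by simp, by simp [hγ0], by simp⟩
  | succ n ih =>
    intro γ hN hsum hpart
    have hex_pos : ∃ i, 0 < γ i := by
      by_contra h
      push_neg at h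
      have : Npos γ = 0 := Finset.sum_eq_zero fun i _ => by have := h i; omega
      omega
    have hex_neg : ∃ j, γ j < 0 := by
      by_contra h
      push_neg at h
      obtain ⟨i, hi⟩ := hex_pos
      have hlt : 0 < ∑ k, γ k :=
        Finset.sum_pos' (fun k _ => h k) ⟨i, mem_univ i, hi⟩
      omega
    -- minimal j with γ j < 0
    obtain ⟨j0, hj0⟩ := hex_neg
    have hSne : (univ.filter (fun j => γ j < 0)).Nonempty := ⟨j0, by simp [hj0]⟩
    obtain ⟨j, hjS, hjmin⟩ := Finset.exists_min_image _ id hSne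
    have hj : γ j < 0 := (Finset.mem_filter.mp hjS).2
    have hmin : ∀ m, m < j → 0 ≤ γ m := by
      intro m hm
      by_contra h
      push_neg at h
      exact absurd (hjmin m (by simp [h])) (not_le.mpr hm)
    -- find i < j with γ i > 0
    have hIic : ∑ m ∈ Finset.Iic j, γ m = ∑ m ∈ Finset.Iio j, γ m + γ j := by
      rw [← Finset.Iio_insert, Finset.sum_insert (by simp)]
      ring
    have hIio : 0 < ∑ m ∈ Finset.Iio j, γ m := by
      have := hpart j
      omega
    obtain ⟨i, hi_mem, hi_pos⟩ : ∃ i ∈ Finset.Iio j, 0 < γ i := by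
      by_contra h
      push_neg at h
      have : ∑ m ∈ Finset.Iio j, γ m ≤ 0 :=
        Finset.sum_nonpos (fun m hm => h m hm)
      omega
    have hij : i < j := Finset.mem_Iio.mp hi_mem
    set v : Fin (ℓ + 1) → ℤ := Pi.single i 1 - Pi.single j 1 with hv
    set γ' : Fin (ℓ + 1) → ℤ := γ - v with hγ'
    have hptw : ∀ k, (γ k).toNat = (γ' k).toNat + (if k = i then 1 else 0) := by
      intro k
      have hvk : v k = (if k = i then 1 else 0) - (if k = j then 1 else 0) := by
        simp [hv, Pi.single_apply]
      have hγk : γ' k = γ k - v k := rfl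
      rcases eq_or_ne k i with rfl | hki
      · rw [hγk, hvk, if_pos rfl, if_neg hij.ne, if_pos rfl]
        omega
      · rcases eq_or_ne k j with rfl | hkj
        · rw [hγk, hvk, if_neg hki, if_pos rfl, if_neg hki]
          omega
        · rw [hγk, hvk, if_neg hki, if_neg hkj, if_neg hki]
          omega
    have hN' : Npos γ' = n := by
      have hs : Npos γ = Npos γ' + 1 := by
        unfold Npos
        rw [Finset.sum_congr rfl (fun k _ => hptw k), Finset.sum_add_distrib]
        simp
      omega
    have hsum' : ∑ k, γ' k = 0 := by
      have : ∑ k, γ' k = ∑ k, γ k - ∑ k, v k := by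
        simp only [hγ', Pi.sub_apply, Finset.sum_sub_distrib]
      rw [this, hsum, hv, root_total_sum]
      ring
    have hpart' : ∀ k, 0 ≤ ∑ m ∈ Finset.Iic k, γ' m := by
      intro k
      have hsplit : ∑ m ∈ Finset.Iic k, γ' m
          = (∑ m ∈ Finset.Iic k, γ m)
            - ((if i ≤ k then 1 else 0) - (if j ≤ k then 1 else 0)) := by
        have : ∑ m ∈ Finset.Iic k, γ' m
            = ∑ m ∈ Finset.Iic k, γ m - ∑ m ∈ Finset.Iic k, v m := by
          simp only [hγ', Pi.sub_apply, Finset.sum_sub_distrib]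
        rw [this, hv, root_Iic_sum]
      rcases le_or_gt j k with hjk | hjk
      · have hik : i ≤ k := (hij.trans_le hjk).le
        rw [hsplit, if_pos hik, if_pos hjk]
        have := hpart k
        linarith
      · rcases le_or_gt i k with hik | hik
        · rw [hsplit, if_pos hik, if_neg (not_le.mpr hjk)]
          have hone : γ i ≤ ∑ m ∈ Finset.Iic k, γ m := by
            refine Finset.single_le_sum (fun m hm => ?_) (mem_Iic.mpr hik)
            exact hmin m ((mem_Iic.mp hm).trans_lt hjk)
          linarith
        · rw [hsplit, if_neg (not_le.mpr hik), if_neg (not_le.mpr hjk)]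
          have := hpart k
          linarith
    obtain ⟨m', hm'1, hm'2, hm'3⟩ := ih γ' hN' hsum' hpart'
    refine ⟨v ::ₘ m', ?_, ?_, ?_⟩
    · intro x hx
      rcases Multiset.mem_cons.mp hx with rfl | hx
      · exact ⟨i, j, hij, rfl⟩
      · exact hm'1 x hx
    · simp only [Multiset.sum_cons, hm'2, hγ']
      ring
    · simp [hm'3]

lemma closure_props (γ : Fin (ℓ + 1) → ℤ)
    (hγ : γ ∈ AddSubmonoid.closure (posRootsA ℓ)) :
    (∑ i, γ i = 0) ∧ ∀ k, 0 ≤ ∑ i ∈ Finset.Iic k, γ i := by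
  induction hγ using AddSubmonoid.closure_induction with
  | mem x hx =>
    obtain ⟨i, j, hij, rfl⟩ := hx
    refine ⟨root_total_sum i j, fun k => ?_⟩
    rw [root_Iic_sum]
    rcases le_or_gt j k with hjk | hjk
    · rw [if_pos ((hij.trans_le hjk).le), if_pos hjk]
      norm_num
    · rw [if_neg (not_le.mpr hjk)]
      split_ifs <;> norm_num
  | zero => simp
  | add x y hx hy ihx ihy =>
    refine ⟨?_, fun k => ?_⟩
    · simp only [Pi.add_apply, Finset.sum_add_distrib, ihx.1, ihy.1, add_zero]
    · have := ihx.2 k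
      have := ihy.2 k
      simp only [Pi.add_apply, Finset.sum_add_distrib]
      linarith

end AproofAux

open AproofAux in
/-- In type `A_ℓ`, for every `γ` in the ℕ-span of the positive roots, the length
(minimal number of arbitrary roots summing to `γ`) equals the positive length
(minimal number of positive roots summing to `γ`). -/
theorem length_eq_posLength_A (ℓ : ℕ) (γ : Fin (ℓ + 1) → ℤ)
    (hγ : γ ∈ AddSubmonoid.closure (posRootsA ℓ)) :
    minLen (rootsA ℓ) γ = minLen (posRootsA ℓ) γ := by
  obtain ⟨hsum, hpart⟩ := closure_props γ hγ
  obtain ⟨m₀, hm₀S, hm₀sum, hm₀card⟩ := construct (Npos γ) γ rfl hsum hpart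
  set N := Npos γ with hNdef
  have hsub : posRootsA ℓ ⊆ rootsA ℓ := by
    rintro x ⟨i, j, hij, rfl⟩
    exact ⟨i, j, hij.ne, rfl⟩
  set posSet : Set ℕ :=
    {r : ℕ | ∃ m : Multiset (Fin (ℓ + 1) → ℤ),
      (∀ x ∈ m, x ∈ posRootsA ℓ) ∧ m.sum = γ ∧ Multiset.card m = r} with hposSet
  set rootsSet : Set ℕ :=
    {r : ℕ | ∃ m : Multiset (Fin (ℓ + 1) → ℤ),
      (∀ x ∈ m, x ∈ rootsA ℓ) ∧ m.sum = γ ∧ Multiset.card m = r} with hrootsSet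
  have hposmem : N ∈ posSet := ⟨m₀, hm₀S, hm₀sum, hm₀card⟩
  have hrootmem : N ∈ rootsSet := ⟨m₀, fun x hx => hsub (hm₀S x hx), hm₀sum, hm₀card⟩
  have hlb : ∀ r ∈ rootsSet, N ≤ r := by
    rintro r ⟨m, hm, hsum', hcard⟩
    have := lower m hm
    rw [hsum'] at this
    omega
  have h1 : sInf rootsSet = N :=
    le_antisymm (Nat.sInf_le hrootmem) (le_csInf ⟨N, hrootmem⟩ hlb)
  have h2 : sInf posSet = N :=
    le_antisymm (Nat.sInf_le hposmem)
      (le_csInf ⟨N, hposmem⟩ (fun r hr => by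
        obtain ⟨m, hm, hs, hc⟩ := hr
        exact hlb r ⟨m, fun x hx => hsub (hm x hx), hs, hc⟩))
  show sInf rootsSet = sInf posSet
  rw [h1, h2]
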